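/- For F(x,y,z,w,λ) = (x,y,z, w³ + (λ + xy³z³ + y⁵ + z⁵)w, λ), the vector field η(X,Y,Z,W,Λ) = −2X∂/∂X + 2Y∂/∂Y + 2Z∂/∂Z + 15W∂/∂W + 10Λ∂/∂Λ is liftable for F: it is F-related to the source vector field ξ(x,y,z,w,λ) = −2x∂/∂x + 2y∂/∂y + 2z∂/∂z + 5w∂/∂w + 10λ∂/∂λ, i.e. η∘F = DF·ξ. -/

import Mathlib

/-- For `F(x,y,z,w,λ) = (x,y,z, w³+(λ+xy³z³+y⁵+z⁵)w, λ)`, the vector field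
`η = −2X∂_X + 2Y∂_Y + 2Z∂_Z + 15W∂_W + 10Λ∂_Λ` is liftable: it is `F`-related
to `ξ = −2x∂_x + 2y∂_y + 2z∂_z + 5w∂_w + 10λ∂_λ`. -/
theorem stmt_19
    (F : ℂ × ℂ × ℂ × ℂ × ℂ → ℂ × ℂ × ℂ × ℂ × ℂ)
    (hF : ∀ v : ℂ × ℂ × ℂ × ℂ × ℂ,
      F v = (v.1, v.2.1, v.2.2.1,
        v.2.2.2.1 ^ 3 +
          (v.2.2.2.2 + v.1 * v.2.1 ^ 3 * v.2.2.1 ^ 3 + v.2.1 ^ 5 + v.2.2.1 ^ 5) *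
            v.2.2.2.1,
        v.2.2.2.2))
    (η ξ : ℂ × ℂ × ℂ × ℂ × ℂ → ℂ × ℂ × ℂ × ℂ × ℂ)
    (hη : ∀ X : ℂ × ℂ × ℂ × ℂ × ℂ,
      η X = (-2 * X.1, 2 * X.2.1, 2 * X.2.2.1, 15 * X.2.2.2.1, 10 * X.2.2.2.2))
    (hξ : ∀ v : ℂ × ℂ × ℂ × ℂ × ℂ,
      ξ v = (-2 * v.1, 2 * v.2.1, 2 * v.2.2.1, 5 * v.2.2.2.1, 10 * v.2.2.2.2)) :
    ∀ v, fderiv ℂ F v (ξ v) = η (F v) := by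
  have hFeq : F = fun v : ℂ × ℂ × ℂ × ℂ × ℂ => (v.1, v.2.1, v.2.2.1,
        v.2.2.2.1 ^ 3 +
          (v.2.2.2.2 + v.1 * v.2.1 ^ 3 * v.2.2.1 ^ 3 + v.2.1 ^ 5 + v.2.2.1 ^ 5) *
            v.2.2.2.1,
        v.2.2.2.2) := funext hF
  subst hFeq
  intro v
  obtain ⟨x, y, z, w, l⟩ := v
  set v : ℂ × ℂ × ℂ × ℂ × ℂ := (x, y, z, w, l) with hv
  have p1 : HasFDerivAt (fun v : ℂ × ℂ × ℂ × ℂ × ℂ => v.1) _ v := hasFDerivAt_fst (𝕜 := ℂ)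
  have p2 : HasFDerivAt (fun v : ℂ × ℂ × ℂ × ℂ × ℂ => v.2.1) _ v := ((hasFDerivAt_snd (𝕜 := ℂ)).fst)
  have p3 : HasFDerivAt (fun v : ℂ × ℂ × ℂ × ℂ × ℂ => v.2.2.1) _ v :=
    ((hasFDerivAt_snd (𝕜 := ℂ) (E := ℂ) (F := ℂ × ℂ × ℂ × ℂ)).snd.fst)
  have p4 : HasFDerivAt (fun v : ℂ × ℂ × ℂ × ℂ × ℂ => v.2.2.2.1) _ v :=
    ((hasFDerivAt_snd (𝕜 := ℂ) (E := ℂ) (F := ℂ × ℂ × ℂ × ℂ)).snd.snd.fst)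
  have p5 : HasFDerivAt (fun v : ℂ × ℂ × ℂ × ℂ × ℂ => v.2.2.2.2) _ v :=
    ((hasFDerivAt_snd (𝕜 := ℂ) (E := ℂ) (F := ℂ × ℂ × ℂ × ℂ)).snd.snd.snd)
  have h4' := (((p4.mul p4).mul p4).add
        ((((p5.add ((p1.mul ((p2.mul p2).mul p2)).mul ((p3.mul p3).mul p3))).add
          ((((p2.mul p2).mul p2).mul p2).mul p2)).add
          ((((p3.mul p3).mul p3).mul p3).mul p3)).mul p4))
  have hfun : (fun v : ℂ × ℂ × ℂ × ℂ × ℂ =>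
        v.2.2.2.1 * v.2.2.2.1 * v.2.2.2.1 +
          (v.2.2.2.2 + v.1 * (v.2.1 * v.2.1 * v.2.1) * (v.2.2.1 * v.2.2.1 * v.2.2.1) +
            v.2.1 * v.2.1 * v.2.1 * v.2.1 * v.2.1 +
            v.2.2.1 * v.2.2.1 * v.2.2.1 * v.2.2.1 * v.2.2.1) * v.2.2.2.1)
      = (fun v : ℂ × ℂ × ℂ × ℂ × ℂ =>
        v.2.2.2.1 ^ 3 +
          (v.2.2.2.2 + v.1 * v.2.1 ^ 3 * v.2.2.1 ^ 3 + v.2.1 ^ 5 + v.2.2.1 ^ 5) *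
            v.2.2.2.1) := by
    funext u; ring
  simp only [Pi.mul_def, Pi.add_def] at h4'
  rw [hfun] at h4'
  have hD := (p1.prodMk (p2.prodMk (p3.prodMk (h4'.prodMk p5))))
  rw [hD.fderiv]
  simp [hξ, hη, hv]
  ring
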